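/- Let Q be the infinite matrix with entries Q_{ij} = i^{−3/2} j^{1/2} (log i − log j)/(i² − j²) for positive integers i ≠ j and Q_{ii} = i^{−2}/2. Then ∑_{i,j=1}^{∞} |Q_{ij}|² < ∞, i.e., Q is a Hilbert–Schmidt (hence bounded) operator on ℓ². -/

import Mathlib

open Real

/-- The entries `Q_{ij} = i^{-3/2} j^{1/2} (log i - log j)/(i² - j²)` for `i ≠ j`,
`Q_{ii} = i^{-2}/2`. -/
noncomputable def Qent (i j : ℕ+) : ℝ :=
  if i = j then (i : ℝ) ^ (-2 : ℝ) / 2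
  else (i : ℝ) ^ (-(3 : ℝ) / 2) * (j : ℝ) ^ ((1 : ℝ) / 2) *
    (Real.log i - Real.log j) / ((i : ℝ) ^ 2 - (j : ℝ) ^ 2)

lemma log_sub_log_le' {x y : ℝ} (hy : 0 < y) (hxy : y ≤ x) :
    Real.log x - Real.log y ≤ 2 * (x - y) / Real.sqrt (x * y) := by
  have hx : 0 < x := hy.trans_le hxy
  have hs : 0 < Real.sqrt (x * y) := Real.sqrt_pos.2 (mul_pos hx hy)
  have h1 : Real.log x - Real.log y = 2 * Real.log (Real.sqrt (x / y)) := by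
    rw [Real.log_sqrt (div_nonneg hx.le hy.le), Real.log_div hx.ne' hy.ne']
    ring
  have h2 : Real.log (Real.sqrt (x / y)) ≤ Real.sqrt (x / y) - 1 :=
    Real.log_le_sub_one_of_pos (Real.sqrt_pos.2 (div_pos hx hy))
  have h4 : Real.sqrt (x / y) * Real.sqrt (x * y) = x := by
    rw [← Real.sqrt_mul (div_nonneg hx.le hy.le)]
    have : x / y * (x * y) = x ^ 2 := by field_simp
    rw [this, Real.sqrt_sq hx.le]
  have h5 : y ≤ Real.sqrt (x * y) := by
    have := Real.sqrt_le_sqrt (show y * y ≤ x * y from mul_le_mul_of_nonneg_right hxy hy.le)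
    rwa [Real.sqrt_mul_self hy.le] at this
  have h3 : Real.sqrt (x / y) - 1 ≤ (x - y) / Real.sqrt (x * y) := by
    rw [le_div_iff₀ hs, sub_mul, one_mul, h4]
    linarith
  calc Real.log x - Real.log y = 2 * Real.log (Real.sqrt (x / y)) := h1
    _ ≤ 2 * (Real.sqrt (x / y) - 1) := by linarith
    _ ≤ 2 * ((x - y) / Real.sqrt (x * y)) := by linarith
    _ = 2 * (x - y) / Real.sqrt (x * y) := by ring

lemma log_sq_le' {x y : ℝ} (hx : 0 < x) (hy : 0 < y) :
    (Real.log x - Real.log y) ^ 2 ≤ 4 * (x - y) ^ 2 / (x * y) := by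
  rcases le_total y x with hxy | hxy
  · have h := log_sub_log_le' hy hxy
    have h0 : 0 ≤ Real.log x - Real.log y := sub_nonneg.2 (Real.log_le_log hy hxy)
    calc (Real.log x - Real.log y) ^ 2 ≤ (2 * (x - y) / Real.sqrt (x * y)) ^ 2 :=
          pow_le_pow_left₀ h0 h 2
      _ = 4 * (x - y) ^ 2 / (x * y) := by
          rw [div_pow, mul_pow, Real.sq_sqrt (mul_pos hx hy).le]; norm_num
  · have h := log_sub_log_le' hx hxy
    have h0 : 0 ≤ Real.log y - Real.log x := sub_nonneg.2 (Real.log_le_log hx hxy)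
    calc (Real.log x - Real.log y) ^ 2 = (Real.log y - Real.log x) ^ 2 := by ring
      _ ≤ (2 * (y - x) / Real.sqrt (y * x)) ^ 2 := pow_le_pow_left₀ h0 h 2
      _ = 4 * (x - y) ^ 2 / (x * y) := by
          rw [div_pow, mul_pow, Real.sq_sqrt (mul_pos hy hx).le, mul_comm y x]; ring_nf

lemma qbound (i j : ℕ+) :
    |Qent i j| ^ 2 ≤ 4 * (((i:ℝ) ^ 2)⁻¹ * ((j:ℝ) ^ 2)⁻¹) := by
  have hi : (0:ℝ) < (i:ℝ) := by exact_mod_cast i.pos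
  have hj : (0:ℝ) < (j:ℝ) := by exact_mod_cast j.pos
  have hi1 : (1:ℝ) ≤ (i:ℝ) := by exact_mod_cast i.one_le
  have hj1 : (1:ℝ) ≤ (j:ℝ) := by exact_mod_cast j.one_le
  rw [sq_abs]
  unfold Qent
  split_ifs with h
  · subst h
    have e : (i:ℝ) ^ (-2:ℝ) = ((i:ℝ) ^ 2)⁻¹ := by
      rw [show (-2:ℝ) = -((2:ℕ):ℝ) by norm_num, Real.rpow_neg hi.le, Real.rpow_natCast]
    rw [e]
    nlinarith [sq_nonneg (((i:ℝ) ^ 2)⁻¹), sq_nonneg ((i:ℝ) ^ 2)⁻¹]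
  · set A : ℝ := (i:ℝ) with hA
    set B : ℝ := (j:ℝ) with hB
    have hAB : A ≠ B := by
      intro hc
      exact h (PNat.coe_injective (Nat.cast_injective hc))
    have e1 : (A ^ (-(3:ℝ)/2)) ^ 2 = (A ^ 3)⁻¹ := by
      rw [← Real.rpow_natCast (A ^ (-(3:ℝ)/2)) 2, ← Real.rpow_mul hi.le]
      norm_num
    have e2 : (B ^ ((1:ℝ)/2)) ^ 2 = B := by
      rw [← Real.rpow_natCast (B ^ ((1:ℝ)/2)) 2, ← Real.rpow_mul hj.le]
      norm_num
    have hL := log_sq_le' hi hj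
    rw [div_pow, mul_pow, mul_pow, e1, e2]
    have hD : A ^ 2 - B ^ 2 ≠ 0 := by
      intro hc
      apply hAB
      nlinarith
    calc (A ^ 3)⁻¹ * B * (Real.log A - Real.log B) ^ 2 / (A ^ 2 - B ^ 2) ^ 2
        ≤ (A ^ 3)⁻¹ * B * (4 * (A - B) ^ 2 / (A * B)) / (A ^ 2 - B ^ 2) ^ 2 := by
          apply div_le_div_of_nonneg_right ?_ (by positivity)
          exact mul_le_mul_of_nonneg_left hL (by positivity)
      _ = 4 * (A - B) ^ 2 / (A ^ 4 * (A ^ 2 - B ^ 2) ^ 2) := by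
          field_simp
      _ ≤ 4 * ((A ^ 2)⁻¹ * (B ^ 2)⁻¹) := by
          rw [show 4 * ((A ^ 2)⁻¹ * (B ^ 2)⁻¹) = 4 / (A ^ 2 * B ^ 2) by field_simp,
            div_le_div_iff₀ (by positivity) (by positivity)]
          have hb : B ^ 2 ≤ A ^ 2 * (A + B) ^ 2 := by
            have h1 : B ^ 2 ≤ (A + B) ^ 2 := by nlinarith
            have hA2 : 1 ≤ A ^ 2 := by nlinarith
            have h2 : (A + B) ^ 2 ≤ A ^ 2 * (A + B) ^ 2 :=
              le_mul_of_one_le_left (sq_nonneg _) hA2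
            linarith
          nlinarith [mul_le_mul_of_nonneg_left hb
            (show (0:ℝ) ≤ 4 * (A - B) ^ 2 by positivity), sq_nonneg (A - B), sq_nonneg (A + B)]

/-- `∑_{i,j} |Q_{ij}|² < ∞`: `Q` is a Hilbert–Schmidt (hence bounded) operator on `ℓ²`. -/
theorem stmt_8 : Summable (fun p : ℕ+ × ℕ+ => |Qent p.1 p.2| ^ 2) := by
  have hN : Summable (fun n : ℕ => ((n:ℝ) ^ 2)⁻¹) :=
    Real.summable_nat_pow_inv.2 one_lt_two
  have hsum : Summable (fun n : ℕ+ => ((n:ℝ) ^ 2)⁻¹) :=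
    hN.comp_injective (fun a b hab => PNat.coe_injective hab)
  have hprod : Summable (fun p : ℕ+ × ℕ+ => ((p.1:ℝ) ^ 2)⁻¹ * ((p.2:ℝ) ^ 2)⁻¹) :=
    hsum.mul_of_nonneg hsum (fun _ => by positivity) (fun _ => by positivity)
  exact Summable.of_nonneg_of_le (fun p => by positivity) (fun p => qbound p.1 p.2)
    (hprod.mul_left 4)
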